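/- For any f: ℕ → ℕ, the function f̃ defined recursively by f̃(n+1) = sup{a > 0 : a^m Π_{i=1}^n f̃(i) ≤ Π_{i=1}^{n+m} f(i) for all m ≥ 1} (with f̃(1) = inf_{m≥1} (Π_{i=1}^m f(i))^{1/m}) is nondecreasing, and f̃ = f when f is nondecreasing. -/
import Mathlib

open MeasureTheory ProbabilityTheory Filter Finset

/-- `Π_{i=1}^n f̃(i)`, the running product of the convexified growth function:
`f̃(n+1) = sup{a > 0 : a^m Π_{i=1}^n f̃(i) ≤ Π_{i=1}^{n+m} f(i) for all m ≥ 1}`. -/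
noncomputable def ftilProd (f : ℕ → ℕ) : ℕ → ℝ
  | 0 => 1
  | n + 1 => ftilProd f n * sSup {a : ℝ | 0 < a ∧ ∀ m : ℕ, 1 ≤ m →
      a ^ m * ftilProd f n ≤ ∏ i ∈ Finset.Icc 1 (n + m), (f i : ℝ)}

/-- the convexified growth function `f̃` (indexed so that `ftilde f n` is `f̃(n)` for
`n ≥ 1`). -/
noncomputable def ftilde (f : ℕ → ℕ) (n : ℕ) : ℝ := ftilProd f n / ftilProd f (n - 1)

namespace FtildeAux

variable (f : ℕ → ℕ)

/-- the defining set -/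
def S (n : ℕ) : Set ℝ := {a : ℝ | 0 < a ∧ ∀ m : ℕ, 1 ≤ m →
      a ^ m * ftilProd f n ≤ ∏ i ∈ Finset.Icc 1 (n + m), (f i : ℝ)}

/-- the running product of `f` -/
noncomputable def F (n : ℕ) : ℝ := ∏ i ∈ Finset.Icc 1 n, (f i : ℝ)

lemma ftilProd_succ (n : ℕ) : ftilProd f (n + 1) = ftilProd f n * sSup (S f n) := rfl

lemma mem_S_iff (a : ℝ) (n : ℕ) :
    a ∈ S f n ↔ 0 < a ∧ ∀ m : ℕ, 1 ≤ m → a ^ m * ftilProd f n ≤ F f (n + m) := Iff.rfl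

variable {f}

lemma F_eq_cast (f : ℕ → ℕ) (n : ℕ) : F f n = ((∏ i ∈ Finset.Icc 1 n, f i : ℕ) : ℝ) := by
  rw [F, Nat.cast_prod]

lemma one_le_F (hf : ∀ n, 1 ≤ f n) (n : ℕ) : 1 ≤ F f n := by
  rw [F_eq_cast]
  exact_mod_cast Finset.one_le_prod' fun i _ => hf i

lemma F_pos (hf : ∀ n, 1 ≤ f n) (n : ℕ) : 0 < F f n :=
  lt_of_lt_of_le one_pos (one_le_F hf n)

lemma bddAbove_S (hP : 0 < ftilProd f n) : BddAbove (S f n) := by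
  refine ⟨F f (n + 1) / ftilProd f n, fun a ha => ?_⟩
  have := ha.2 1 le_rfl
  rw [pow_one] at this
  exact (le_div_iff₀ hP).2 this

lemma one_mem_S {n : ℕ} (h : ∀ m, 1 ≤ m → ftilProd f n ≤ F f (n + m)) : (1 : ℝ) ∈ S f n := by
  refine ⟨one_pos, fun m hm => ?_⟩
  rw [one_pow, one_mul]
  exact h m hm

lemma sSup_mem_S {n : ℕ} (hf : ∀ k, 1 ≤ f k) (hP : 0 < ftilProd f n)
    (h : ∀ m, 1 ≤ m → ftilProd f n ≤ F f (n + m)) : sSup (S f n) ∈ S f n := by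
  have h1 : (1 : ℝ) ∈ S f n := one_mem_S h
  have hc1 : (1 : ℝ) ≤ sSup (S f n) := le_csSup (bddAbove_S hP) h1
  refine ⟨lt_of_lt_of_le one_pos hc1, fun m hm => ?_⟩
  have hmne : m ≠ 0 := by omega
  have hm0 : (m : ℝ) ≠ 0 := Nat.cast_ne_zero.mpr hmne
  set x : ℝ := F f (n + m) / ftilProd f n with hx
  have hx0 : 0 ≤ x := div_nonneg (F_pos hf (n + m)).le hP.le
  set b : ℝ := x ^ ((m : ℝ)⁻¹) with hb
  have hbm : b ^ m = x := by
    rw [hb, ← Real.rpow_natCast (x ^ ((m : ℝ)⁻¹)) m, ← Real.rpow_mul hx0,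
      inv_mul_cancel₀ hm0, Real.rpow_one]
  have hub : ∀ a ∈ S f n, a ≤ b := by
    intro a ha
    refine le_of_pow_le_pow_left₀ hmne (Real.rpow_nonneg hx0 _) ?_
    rw [hbm]
    exact (le_div_iff₀ hP).2 (ha.2 m hm)
  have hc : sSup (S f n) ≤ b := csSup_le ⟨1, h1⟩ hub
  have : sSup (S f n) ^ m ≤ x := by
    rw [← hbm]
    exact pow_le_pow_left₀ (le_trans zero_le_one hc1) hc m
  exact (le_div_iff₀ hP).1 this

lemma key (hf : ∀ k, 1 ≤ f k) :
    ∀ n, 0 < ftilProd f n ∧ ∀ m, 1 ≤ m → ftilProd f n ≤ F f (n + m) := by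
  intro n
  induction n with
  | zero =>
    refine ⟨one_pos, fun m hm => ?_⟩
    show (1 : ℝ) ≤ F f (0 + m)
    exact one_le_F hf _
  | succ n ih =>
    obtain ⟨hP, hle⟩ := ih
    have hcS := sSup_mem_S hf hP hle
    have hc1 : (1 : ℝ) ≤ sSup (S f n) := le_csSup (bddAbove_S hP) (one_mem_S hle)
    constructor
    · rw [ftilProd_succ]
      exact mul_pos hP (lt_of_lt_of_le one_pos hc1)
    · intro m hm
      have h2 := hcS.2 (m + 1) (by omega)
      have heq : n + (m + 1) = n + 1 + m := by omega
      rw [heq] at h2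
      rw [ftilProd_succ]
      calc ftilProd f n * sSup (S f n) = sSup (S f n) * ftilProd f n := mul_comm _ _
        _ ≤ sSup (S f n) ^ (m + 1) * ftilProd f n :=
          mul_le_mul_of_nonneg_right (le_self_pow₀ hc1 (by omega)) hP.le
        _ ≤ F f (n + 1 + m) := h2

lemma sSup_le_sSup_succ (hf : ∀ k, 1 ≤ f k) (n : ℕ) :
    sSup (S f n) ≤ sSup (S f (n + 1)) := by
  obtain ⟨hP, hle⟩ := key hf n
  obtain ⟨hP1, _⟩ := key hf (n + 1)
  have hcS := sSup_mem_S hf hP hle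
  refine le_csSup (bddAbove_S hP1) ⟨hcS.1, fun m hm => ?_⟩
  show sSup (S f n) ^ m * ftilProd f (n + 1) ≤ F f (n + 1 + m)
  rw [ftilProd_succ]
  have h2 := hcS.2 (m + 1) (by omega)
  have heq : n + (m + 1) = n + 1 + m := by omega
  rw [heq] at h2
  calc sSup (S f n) ^ m * (ftilProd f n * sSup (S f n))
      = sSup (S f n) ^ (m + 1) * ftilProd f n := by ring
    _ ≤ F f (n + 1 + m) := h2

lemma ftilde_succ (hf : ∀ k, 1 ≤ f k) (n : ℕ) : ftilde f (n + 1) = sSup (S f n) := by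
  obtain ⟨hP, _⟩ := key hf n
  rw [ftilde]
  simp only [Nat.add_sub_cancel]
  rw [ftilProd_succ, mul_comm, mul_div_assoc, div_self hP.ne', mul_one]

lemma sSup_mono (hf : ∀ k, 1 ≤ f k) {a b : ℕ} (h : a ≤ b) :
    sSup (S f a) ≤ sSup (S f b) := by
  induction b with
  | zero =>
    have : a = 0 := by omega
    subst this; exact le_rfl
  | succ b ih =>
    rcases Nat.lt_or_ge a (b + 1) with h' | h'
    · exact le_trans (ih (by omega)) (sSup_le_sSup_succ hf b)
    · have : a = b + 1 := by omega
      subst this; rfl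

lemma F_succ (n : ℕ) : F f (n + 1) = F f n * (f (n + 1) : ℝ) := by
  rw [F, F, Finset.prod_Icc_succ_top (by omega : 1 ≤ n + 1)]

lemma sSup_S_eq (hf : ∀ k, 1 ≤ f k) (hmono : ∀ m n : ℕ, 1 ≤ m → m ≤ n → f m ≤ f n)
    (n : ℕ) (hPn : ftilProd f n = F f n) : sSup (S f n) = (f (n + 1) : ℝ) := by
  obtain ⟨hP, hle⟩ := key hf n
  have hcS := sSup_mem_S hf hP hle
  apply le_antisymm
  · have h1 : sSup (S f n) * F f n ≤ F f (n + 1) := by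
      have := hcS.2 1 le_rfl
      rwa [pow_one, hPn] at this
    rw [F_succ, mul_comm (F f n) _] at h1
    exact le_of_mul_le_mul_right h1 (F_pos hf n)
  · refine le_csSup (bddAbove_S hP) ⟨Nat.cast_pos.mpr (hf (n + 1)), fun m hm => ?_⟩
    show ((f (n + 1) : ℝ)) ^ m * ftilProd f n ≤ F f (n + m)
    rw [hPn]
    have hIoc : ∀ k, F f k = ∏ i ∈ Finset.Ioc 0 k, (f i : ℝ) := fun k => by
      rw [F, show Finset.Icc 1 k = Finset.Ioc 0 k from Finset.Icc_add_one_left_eq_Ioc 0 k]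
    have hsplit : F f n * ∏ i ∈ Finset.Ioc n (n + m), (f i : ℝ) = F f (n + m) := by
      rw [hIoc n, hIoc (n + m)]
      exact Finset.prod_Ioc_consecutive _ (Nat.zero_le n) (Nat.le_add_right n m)
    rw [← hsplit, mul_comm (F f n) _]
    refine mul_le_mul_of_nonneg_right ?_ (F_pos hf n).le
    calc ((f (n + 1) : ℝ)) ^ m = ∏ _i ∈ Finset.Ioc n (n + m), ((f (n + 1) : ℝ)) := by
          rw [Finset.prod_const, Nat.card_Ioc]
          congr 1
          omega
      _ ≤ ∏ i ∈ Finset.Ioc n (n + m), (f i : ℝ) :=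
          Finset.prod_le_prod (fun i _ => by positivity)
            (fun i hi => by exact_mod_cast hmono (n + 1) i (by omega) (Finset.mem_Ioc.1 hi).1)

lemma P_eq (hf : ∀ k, 1 ≤ f k) (hmono : ∀ m n : ℕ, 1 ≤ m → m ≤ n → f m ≤ f n) :
    ∀ n, ftilProd f n = F f n := by
  intro n
  induction n with
  | zero =>
    show (1 : ℝ) = F f 0
    rw [F]; simp
  | succ n ih =>
    rw [ftilProd_succ, ih, sSup_S_eq hf hmono n ih, F_succ]

end FtildeAux

/-- `f̃` is always nondecreasing, and `f̃ = f` when `f` is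
nondecreasing. -/
theorem ftilde_monotone_and_eq_of_monotone (f : ℕ → ℕ) (hf : ∀ n, 1 ≤ f n) :
    (∀ m n : ℕ, 1 ≤ m → m ≤ n → ftilde f m ≤ ftilde f n) ∧
    ((∀ m n : ℕ, 1 ≤ m → m ≤ n → f m ≤ f n) →
      ∀ n : ℕ, 1 ≤ n → ftilde f n = (f n : ℝ)) := by
  constructor
  · intro m n hm hmn
    obtain ⟨a, rfl⟩ : ∃ a, m = a + 1 := ⟨m - 1, by omega⟩
    obtain ⟨b, rfl⟩ : ∃ b, n = b + 1 := ⟨n - 1, by omega⟩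
    rw [FtildeAux.ftilde_succ hf, FtildeAux.ftilde_succ hf]
    exact FtildeAux.sSup_mono hf (by omega)
  · intro hmono n hn
    obtain ⟨b, rfl⟩ : ∃ b, n = b + 1 := ⟨n - 1, by omega⟩
    rw [FtildeAux.ftilde_succ hf,
      FtildeAux.sSup_S_eq hf hmono b (FtildeAux.P_eq hf hmono b)]
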